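/- arXiv:2308.01359 — 3 statements merged into one kernel-verified Lean document; each statement's English description precedes it below -/
import Mathlib

section
/- Let G be a finite simple graph with maximum degree at most Δ, let K be a nonempty set of vertices of G, and let v ∈ K. If ã_v ≥ 0, ā_K ≤ ē_K/4 and ẽ_v ≤ ē_K/4, then Δ² − d̃(v) ≥ ē_K/2. -/
open Finset

variable {V : Type*} [Fintype V] [DecidableEq V]

/-- The distance-2 neighborhood of `v` in `G`: the neighborhood of `v` in the square graph `G²`. -/
def N2 (G : SimpleGraph V) [DecidableRel G.Adj] (v : V) : Finset V :=
  univ.filter fun u => u ≠ v ∧ (G.Adj v u ∨ ∃ w, G.Adj v w ∧ G.Adj w u)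

lemma N2_card_le (G : SimpleGraph V) [DecidableRel G.Adj] (Δ : ℕ)
    (hdeg : ∀ u, G.degree u ≤ Δ) (u : V) : (N2 G u).card ≤ Δ ^ 2 := by
  have hsub : N2 G u ⊆ G.neighborFinset u ∪
      (G.neighborFinset u).biUnion (fun w => G.neighborFinset w \ {u}) := by
    intro x hx
    simp only [N2, mem_filter, mem_univ, true_and] at hx
    obtain ⟨hne, h⟩ := hx
    rcases h with h | ⟨w, hw1, hw2⟩
    · exact mem_union_left _ (by simpa [SimpleGraph.mem_neighborFinset] using h)
    · refine mem_union_right _ (mem_biUnion.2 ⟨w, ?_, ?_⟩)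
      · simpa [SimpleGraph.mem_neighborFinset] using hw1
      · simp [SimpleGraph.mem_neighborFinset, hw2, hne]
  calc (N2 G u).card ≤ (G.neighborFinset u ∪
        (G.neighborFinset u).biUnion (fun w => G.neighborFinset w \ {u})).card :=
          card_le_card hsub
    _ ≤ (G.neighborFinset u).card +
        ((G.neighborFinset u).biUnion (fun w => G.neighborFinset w \ {u})).card :=
          card_union_le _ _
    _ ≤ Δ + ∑ w ∈ G.neighborFinset u, (G.neighborFinset w \ {u}).card := by
        exact Nat.add_le_add (hdeg u) (card_biUnion_le)
    _ ≤ Δ + ∑ w ∈ G.neighborFinset u, (Δ - 1) := by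
        refine Nat.add_le_add_left (Finset.sum_le_sum fun w hw => ?_) _
        have hu : u ∈ G.neighborFinset w := by
          rw [SimpleGraph.mem_neighborFinset] at hw ⊢
          exact hw.symm
        have : (G.neighborFinset w \ {u}).card = (G.neighborFinset w).card - 1 := by
          rw [card_sdiff_of_subset (by simpa using hu)]
          simp
        rw [this]
        exact Nat.sub_le_sub_right (hdeg w) 1
    _ = Δ + (G.neighborFinset u).card * (Δ - 1) := by rw [Finset.sum_const, smul_eq_mul]
    _ ≤ Δ + Δ * (Δ - 1) := Nat.add_le_add_left (Nat.mul_le_mul_right _ (hdeg u)) _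
    _ ≤ Δ ^ 2 := by
        cases Δ with
        | zero => simp
        | succ n =>
          rw [Nat.succ_sub_one]
          exact le_of_eq (by ring)

/-- If `ã_v ≥ 0`, `ā_K ≤ ē_K/4` and `ẽ_v ≤ ē_K/4`, then `Δ² − d̃(v) ≥ ē_K/2`. -/
theorem degree_slack_of_small_avg (G : SimpleGraph V) [DecidableRel G.Adj] (Δ : ℕ)
    (hdeg : ∀ u, G.degree u ≤ Δ)
    (K : Finset V) (hK : K.Nonempty) (v : V) (hv : v ∈ K)
    (eBar aBar : ℝ)
    (heBar : eBar = (∑ u ∈ K, ((N2 G u \ K).card : ℝ)) / K.card)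
    (haBar : aBar = (∑ u ∈ K, ((K \ N2 G u).card : ℝ)) / K.card)
    -- pseudo-anti-degree `ã_v = |K| − Σ_{u ∈ N(v)} |N(u) ∩ K|` is nonnegative
    (hanti : (0 : ℝ) ≤ (K.card : ℝ)
        - ∑ u ∈ G.neighborFinset v, ((G.neighborFinset u ∩ K).card : ℝ))
    (ha : aBar ≤ eBar / 4)
    -- pseudo-external degree `ẽ_v = Σ_{u ∈ N(v)} |N(u) \ K|` is at most `ē_K/4`
    (he : (∑ u ∈ G.neighborFinset v, ((G.neighborFinset u \ K).card : ℝ)) ≤ eBar / 4) :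
    eBar / 2 ≤ (Δ : ℝ) ^ 2
        - ∑ u ∈ G.neighborFinset v, ((G.neighborFinset u).card : ℝ) := by
  have hn : (0 : ℝ) < K.card := by exact_mod_cast card_pos.mpr hK
  -- per-vertex inequality: |K| + e_u ≤ Δ² + a_u
  have key : ∀ u ∈ K, (K.card : ℝ) + ((N2 G u \ K).card : ℝ)
      ≤ (Δ : ℝ) ^ 2 + ((K \ N2 G u).card : ℝ) := by
    intro u _
    have hid : K.card + (N2 G u \ K).card = (N2 G u).card + (K \ N2 G u).card := by
      have h1 : (K \ N2 G u).card + (K ∩ N2 G u).card = K.card :=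
        card_sdiff_add_card_inter K (N2 G u)
      have h2 : (N2 G u \ K).card + (N2 G u ∩ K).card = (N2 G u).card :=
        card_sdiff_add_card_inter (N2 G u) K
      rw [inter_comm] at h2
      omega
    have hle : (N2 G u).card ≤ Δ ^ 2 := N2_card_le G Δ hdeg u
    have : ((K.card + (N2 G u \ K).card : ℕ) : ℝ)
        ≤ ((Δ ^ 2 + (K \ N2 G u).card : ℕ) : ℝ) := by
      exact_mod_cast by omega
    push_cast at this
    linarith
  -- sum over K and divide
  have hsum : (K.card : ℝ) * K.card + ∑ u ∈ K, ((N2 G u \ K).card : ℝ)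
      ≤ (K.card : ℝ) * (Δ : ℝ) ^ 2 + ∑ u ∈ K, ((K \ N2 G u).card : ℝ) := by
    have := Finset.sum_le_sum key
    rw [Finset.sum_add_distrib, Finset.sum_add_distrib, Finset.sum_const,
      Finset.sum_const] at this
    simpa [nsmul_eq_mul] using this
  have hsE : ∑ u ∈ K, ((N2 G u \ K).card : ℝ) = eBar * K.card := by
    rw [heBar]; field_simp
  have hsA : ∑ u ∈ K, ((K \ N2 G u).card : ℝ) = aBar * K.card := by
    rw [haBar, div_mul_cancel₀]; exact hn.ne'
  rw [hsE, hsA] at hsum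
  have hKbound : (K.card : ℝ) + eBar ≤ (Δ : ℝ) ^ 2 + aBar := by
    have := mul_le_mul_of_nonneg_right (le_refl (1 : ℝ)) (le_of_lt hn)
    nlinarith [hn]
  -- split the pseudo-degree
  have hsplit : ∑ u ∈ G.neighborFinset v, ((G.neighborFinset u).card : ℝ)
      = (∑ u ∈ G.neighborFinset v, ((G.neighborFinset u ∩ K).card : ℝ))
      + ∑ u ∈ G.neighborFinset v, ((G.neighborFinset u \ K).card : ℝ) := by
    rw [← Finset.sum_add_distrib]
    refine Finset.sum_congr rfl fun u _ => ?_
    have : (G.neighborFinset u \ K).card + (G.neighborFinset u ∩ K).card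
        = (G.neighborFinset u).card := card_sdiff_add_card_inter _ _
    exact_mod_cast by omega
  rw [hsplit]
  linarith
end

section
/- (Filtering Lemma.) Let K be a nonempty finite set, δ ∈ (0, 4/5), η = δ/(12(1−δ)), and x : K → ℝ with 1 ≤ x_v for all v ∈ K. Let ℓ ∈ ℕ be such that x_v < (1+η)^{ℓ+1} for all v, and for i = 0,…,ℓ set S_i = {v ∈ K : (1+η)^i ≤ x_v < (1+η)^{i+1}}. Suppose s_0,…,s_ℓ are reals with |S_i| ≤ s_i ≤ (1+η)³·|S_i| for every i. Let M ≥ 1 and suppose the set A = {v ∈ K : x_v ≤ M} has |A| ≥ (1−δ)|K|. Define τ as the least i ∈ {0,…,ℓ} with Σ_{j≤i} s_j ≥ (1−δ)|K| (such i exists), and let Ã = ∪_{j≤τ} S_j. Then |Ã| ≥ (1 − 1.5δ)|K| and every v ∈ Ã satisfies x_v ≤ (1+η)M ≤ 2M. -/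
open Finset

/-- **Filtering Lemma.** Buckets `S i` partition `K` geometrically according to `x`,
the `s i` approximate the bucket sizes within a factor `(1+η)³`, and at least a
`(1−δ)` fraction of `K` has `x_v ≤ M`. Then a least index `τ` with
`Σ_{j≤τ} s j ≥ (1−δ)|K|` exists, and `Ã = ∪_{j≤τ} S j` satisfies
`|Ã| ≥ (1 − 1.5δ)|K|` and `x_v ≤ (1+η)M ≤ 2M` for every `v ∈ Ã`. -/
theorem filtering_lemma {α : Type*} [DecidableEq α]
    (K : Finset α) (hK : K.Nonempty)
    (δ : ℝ) (hδ0 : 0 < δ) (hδ1 : δ < 4 / 5)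
    (η : ℝ) (hη : η = δ / (12 * (1 - δ)))
    (x : α → ℝ) (hx : ∀ v ∈ K, 1 ≤ x v)
    (ℓ : ℕ) (hℓ : ∀ v ∈ K, x v < (1 + η) ^ (ℓ + 1))
    (S : ℕ → Finset α)
    (hS : ∀ i, S i = K.filter fun v => (1 + η) ^ i ≤ x v ∧ x v < (1 + η) ^ (i + 1))
    (s : ℕ → ℝ)
    (hs : ∀ i ≤ ℓ, ((S i).card : ℝ) ≤ s i ∧ s i ≤ (1 + η) ^ 3 * (S i).card)
    (M : ℝ) (hM : 1 ≤ M)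
    (hA : (1 - δ) * K.card ≤ ((K.filter fun v => x v ≤ M).card : ℝ)) :
    (∃ i ≤ ℓ, (1 - δ) * K.card ≤ ∑ j ∈ Finset.range (i + 1), s j) ∧
    ∀ τ ≤ ℓ, (1 - δ) * K.card ≤ ∑ j ∈ Finset.range (τ + 1), s j →
      (∀ i < τ, ∑ j ∈ Finset.range (i + 1), s j < (1 - δ) * K.card) →
      (1 - 1.5 * δ) * K.card ≤ (((Finset.range (τ + 1)).biUnion S).card : ℝ) ∧
      ∀ v ∈ (Finset.range (τ + 1)).biUnion S,
        x v ≤ (1 + η) * M ∧ (1 + η) * M ≤ 2 * M := by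
  have hδ1' : δ < 1 := by linarith
  have h1δ : (0:ℝ) < 1 - δ := by linarith
  have hη0 : 0 < η := by rw [hη]; positivity
  have hη1 : η < 1 := by
    rw [hη, div_lt_one (by positivity)]; nlinarith
  have h1η : (1:ℝ) < 1 + η := by linarith
  have hpow : ∀ {i j : ℕ}, i ≤ j → (1+η)^i ≤ (1+η)^j :=
    fun h => pow_le_pow_right₀ (le_of_lt h1η) h
  have hη' : 12 * η * (1 - δ) = δ := by
    rw [hη]; field_simp
  have hdisj : ∀ i j : ℕ, i ≠ j → Disjoint (S i) (S j) := by
    intro i j hij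
    rw [Finset.disjoint_left]
    intro a hai haj
    rw [hS, mem_filter] at hai haj
    rcases hij.lt_or_gt with h | h
    · have h1 : (1+η)^(i+1) ≤ (1+η)^j := hpow (Nat.succ_le_of_lt h)
      linarith [hai.2.2, haj.2.1]
    · have h1 : (1+η)^(j+1) ≤ (1+η)^i := hpow (Nat.succ_le_of_lt h)
      linarith [haj.2.2, hai.2.1]
  have hcover : ∀ v ∈ K, ∃ i ≤ ℓ, v ∈ S i := by
    intro v hv
    have hP0 : (fun i : ℕ => (1+η)^i ≤ x v) 0 := by simpa using hx v hv
    have hile : Nat.findGreatest (fun i : ℕ => (1+η)^i ≤ x v) ℓ ≤ ℓ :=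
      Nat.findGreatest_le ℓ
    refine ⟨Nat.findGreatest (fun i : ℕ => (1+η)^i ≤ x v) ℓ, hile, ?_⟩
    rw [hS, mem_filter]
    have hspec : (fun i : ℕ => (1+η)^i ≤ x v)
        (Nat.findGreatest (fun i : ℕ => (1+η)^i ≤ x v) ℓ) :=
      Nat.findGreatest_spec (P := fun i : ℕ => (1+η)^i ≤ x v) (Nat.zero_le ℓ) hP0
    refine ⟨hv, hspec, ?_⟩
    rcases eq_or_lt_of_le hile with h | h
    · rw [h]; exact hℓ v hv
    · have hng : ¬ (fun i : ℕ => (1+η)^i ≤ x v)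
          (Nat.findGreatest (fun i : ℕ => (1+η)^i ≤ x v) ℓ + 1) :=
        Nat.findGreatest_is_greatest (P := fun i : ℕ => (1+η)^i ≤ x v) (Nat.lt_succ_self _) h
      exact lt_of_not_ge hng
  have hcards : ∀ t : ℕ, (((range (t+1)).biUnion S).card : ℝ)
      = ∑ j ∈ range (t+1), ((S j).card : ℝ) := by
    intro t
    rw [Finset.card_biUnion (fun i _ j _ hij => hdisj i j hij)]
    push_cast
    rfl
  have hunion : (range (ℓ+1)).biUnion S = K := by
    apply Finset.Subset.antisymm
    · intro v hv
      rw [mem_biUnion] at hv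
      obtain ⟨j, _, hvj⟩ := hv
      rw [hS] at hvj
      exact Finset.mem_of_mem_filter v hvj
    · intro v hv
      obtain ⟨i, hiℓ, hvi⟩ := hcover v hv
      exact mem_biUnion.2 ⟨i, mem_range.2 (Nat.lt_succ_of_le hiℓ), hvi⟩
  have htotal : ∑ j ∈ range (ℓ+1), ((S j).card : ℝ) = (K.card : ℝ) := by
    rw [← hcards ℓ, hunion]
  have hKnn : (0:ℝ) ≤ (K.card : ℝ) := Nat.cast_nonneg _
  constructor
  · refine ⟨ℓ, le_rfl, ?_⟩
    have h2 : ∑ j ∈ range (ℓ+1), ((S j).card : ℝ) ≤ ∑ j ∈ range (ℓ+1), s j :=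
      Finset.sum_le_sum fun j hj => (hs j (Nat.lt_succ_iff.1 (mem_range.1 hj))).1
    nlinarith
  · intro τ hτ hge hmin
    have hτM : (1+η)^τ ≤ M := by
      by_contra hcon
      push_neg at hcon
      obtain ⟨t, rfl⟩ : ∃ t, τ = t + 1 := by
        cases τ with
        | zero => simp at hcon; linarith
        | succ t => exact ⟨t, rfl⟩
      have hsub : (K.filter fun v => x v ≤ M) ⊆ (range (t+1)).biUnion S := by
        intro v hv
        rw [mem_filter] at hv
        obtain ⟨i, hiℓ, hvi⟩ := hcover v hv.1
        refine mem_biUnion.2 ⟨i, mem_range.2 ?_, hvi⟩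
        by_contra hit
        push_neg at hit
        have h1 : (1+η)^(t+1) ≤ (1+η)^i := hpow hit
        have h2 : (1+η)^i ≤ x v := by
          rw [hS, mem_filter] at hvi; exact hvi.2.1
        linarith [hv.2]
      have hcardA : ((K.filter fun v => x v ≤ M).card : ℝ)
          ≤ ∑ j ∈ range (t+1), ((S j).card : ℝ) := by
        rw [← hcards t]
        exact_mod_cast Finset.card_le_card hsub
      have h3 : ∑ j ∈ range (t+1), ((S j).card : ℝ) ≤ ∑ j ∈ range (t+1), s j :=
        Finset.sum_le_sum fun j hj => (hs j (by
          have := mem_range.1 hj; omega)).1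
      have := hmin t (Nat.lt_succ_self t)
      linarith
    have hp3 : (0:ℝ) < (1+η)^3 := by positivity
    constructor
    · have hsum_le : ∑ j ∈ range (τ+1), s j
          ≤ (1+η)^3 * ∑ j ∈ range (τ+1), ((S j).card : ℝ) := by
        rw [Finset.mul_sum]
        exact Finset.sum_le_sum fun j hj => (hs j (by
          have := mem_range.1 hj; omega)).2
      have hineq : (1 - 1.5*δ) * (1+η)^3 ≤ 1 - δ := by
        nlinarith [sq_nonneg η, sq_nonneg (η*δ), sq_nonneg (η - δ), mul_pos hη0 hδ0,
          mul_pos (mul_pos hη0 hη0) hδ0, mul_pos hη0 h1δ]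
      have h1 : (1 - 1.5*δ) * (1+η)^3 * (K.card : ℝ) ≤ (1 - δ) * (K.card : ℝ) :=
        mul_le_mul_of_nonneg_right hineq hKnn
      have h2 : (1 - δ) * (K.card : ℝ)
          ≤ (1+η)^3 * (((range (τ+1)).biUnion S).card : ℝ) := by
        rw [hcards τ]; linarith
      nlinarith
    · intro v hv
      rw [mem_biUnion] at hv
      obtain ⟨j, hj, hvj⟩ := hv
      rw [hS, mem_filter] at hvj
      have h1 : x v < (1+η)^(j+1) := hvj.2.2
      have h2 : (1+η)^(j+1) ≤ (1+η)^(τ+1) := hpow (mem_range.1 hj)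
      have h3 : (1+η)^(τ+1) = (1+η)^τ * (1+η) := pow_succ _ _
      have hM0 : (0:ℝ) < M := by linarith
      constructor
      · nlinarith
      · nlinarith
end

section
/- There exist universal constants C, c > 0 such that the following holds. For all reals α, β, ν ∈ (0, 1) with α ≤ β and every integer λ ≥ C·α⁻¹·β⁻²·log(1/ν), there exists an integer σ with c·β⁻²·α⁻¹·log(1/ν) ≤ σ ≤ λ such that: for every finite set U and all sets A, B ⊆ U with |A| ≥ αλ and |A|, |B| ≤ βλ, if h : U → [λ] is chosen uniformly at random among all functions from U to [λ], then with probability at least 1 − ν/2 one has |{x ∈ A : h(x) ∈ [σ] and h(x) ∉ h(B \ {x})}| ≥ (σ|A|/λ)(1 − 3β). -/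
open Finset Function

set_option linter.unusedSectionVars false
set_option maxHeartbeats 2000000

noncomputable section RFRAux
variable {U : Type} [Fintype U] [DecidableEq U] {n : ℕ}


lemma upd_symm (x₀ : U) (w v : Fin n) (g : {a // a ≠ x₀} → Fin n) :
    Function.update ((Equiv.funSplitAt x₀ (Fin n)).symm (w, g)) x₀ v
      = (Equiv.funSplitAt x₀ (Fin n)).symm (v, g) := by
  funext a
  by_cases h : a = x₀
  · subst h; simp [Equiv.funSplitAt, Equiv.piSplitAt, Function.update]
  · simp [Equiv.funSplitAt, Equiv.piSplitAt, Function.update, h]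

lemma sum_update_eq (x₀ : U) (Φ : (U → Fin n) → ℝ) :
    ∑ h : U → Fin n, ∑ v : Fin n, Φ (Function.update h x₀ v) = n * ∑ h, Φ h := by
  rw [← Equiv.sum_comp (Equiv.funSplitAt x₀ (Fin n)).symm
      (fun h => ∑ v : Fin n, Φ (Function.update h x₀ v)),
    ← Equiv.sum_comp (Equiv.funSplitAt x₀ (Fin n)).symm Φ]
  rw [Fintype.sum_prod_type]
  simp only [upd_symm]
  rw [Fintype.sum_prod_type]
  rw [Finset.sum_congr rfl (fun v' _ => Finset.sum_comm (s := Finset.univ) (t := Finset.univ)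
    (f := fun g v => Φ ((Equiv.funSplitAt x₀ (Fin n)).symm (v, g))))]
  rw [Finset.sum_const, Finset.card_univ, Fintype.card_fin, nsmul_eq_mul]

lemma peel (x₀ : U) (F G : (U → Fin n) → ℝ) (K : ℝ)
    (hF : ∀ h v, F (Function.update h x₀ v) = F h)
    (hF0 : ∀ h, 0 ≤ F h)
    (hK : ∀ h, ∑ v : Fin n, G (Function.update h x₀ v) ≤ K) :
    (n : ℝ) * ∑ h : U → Fin n, F h * G h ≤ K * ∑ h : U → Fin n, F h := by
  have key : (n : ℝ) * ∑ h : U → Fin n, F h * G h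
      = ∑ h : U → Fin n, F h * ∑ v : Fin n, G (Function.update h x₀ v) := by
    rw [← sum_update_eq x₀ (fun h => F h * G h)]
    congr 1; funext h
    rw [Finset.mul_sum]
    exact Finset.sum_congr rfl fun v _ => by rw [hF]
  rw [key]
  calc ∑ h : U → Fin n, F h * ∑ v : Fin n, G (Function.update h x₀ v)
      ≤ ∑ h : U → Fin n, F h * K :=
        Finset.sum_le_sum fun h _ => mul_le_mul_of_nonneg_left (hK h) (hF0 h)
    _ = K * ∑ h : U → Fin n, F h := by rw [← Finset.sum_mul, mul_comm]

lemma iterL (hn : 0 < n) (L : List (U × ((U → Fin n) → ℝ) × ℝ))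
    (h0 : ∀ d ∈ L, ∀ h : U → Fin n, 0 ≤ d.2.1 h)
    (hk0 : ∀ d ∈ L, 0 ≤ d.2.2)
    (hK : ∀ d ∈ L, ∀ h : U → Fin n,
      ∑ v : Fin n, d.2.1 (Function.update h d.1 v) ≤ (n : ℝ) * d.2.2)
    (hdep : L.Pairwise (fun d e => ∀ h v, e.2.1 (Function.update h d.1 v) = e.2.1 h)) :
    ∑ h : U → Fin n, (L.map (fun d => d.2.1 h)).prod
      ≤ (L.map (fun d => d.2.2)).prod * (n : ℝ) ^ (Fintype.card U) := by
  induction L with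
  | nil =>
      simp [Finset.sum_const, Finset.card_univ]
  | cons d L ih =>
      rw [List.pairwise_cons] at hdep
      set F : (U → Fin n) → ℝ := fun h => (L.map (fun e => e.2.1 h)).prod with hFdef
      have hF : ∀ h v, F (Function.update h d.1 v) = F h := by
        intro h v
        simp only [hFdef]
        congr 1
        refine List.map_congr_left fun e he => hdep.1 e he h v
      have hF0 : ∀ h, 0 ≤ F h := by
        intro h
        apply List.prod_nonneg
        intro a ha
        rw [List.mem_map] at ha
        obtain ⟨e, he, rfl⟩ := ha
        exact h0 e (List.mem_cons_of_mem d he) h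
      have hpeel := peel d.1 F (d.2.1) ((n : ℝ) * d.2.2) hF hF0
        (hK d (List.mem_cons_self))
      have hstep : ∑ h : U → Fin n, F h * d.2.1 h ≤ d.2.2 * ∑ h : U → Fin n, F h := by
        have hn' : (0 : ℝ) < n := by exact_mod_cast hn
        nlinarith [hpeel]
      have hrest := ih (fun e he h => h0 e (List.mem_cons_of_mem d he) h)
        (fun e he => hk0 e (List.mem_cons_of_mem d he))
        (fun e he h => hK e (List.mem_cons_of_mem d he) h) hdep.2
      calc ∑ h : U → Fin n, ((d :: L).map (fun e => e.2.1 h)).prod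
          = ∑ h : U → Fin n, F h * d.2.1 h := by
            refine Finset.sum_congr rfl fun h _ => ?_
            simp [hFdef, mul_comm]
        _ ≤ d.2.2 * ∑ h : U → Fin n, F h := hstep
        _ ≤ d.2.2 * ((L.map (fun e => e.2.2)).prod * (n : ℝ) ^ (Fintype.card U)) :=
            mul_le_mul_of_nonneg_left hrest (hk0 d (List.mem_cons_self))
        _ = ((d :: L).map (fun e => e.2.2)).prod * (n : ℝ) ^ (Fintype.card U) := by
            simp [mul_assoc]

lemma list_prod_pow (z : ℝ) {ι : Type*} (f : ι → ℕ) (L : List ι) :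
    (L.map (fun d => z ^ f d)).prod = z ^ ((L.map f).sum) := by
  induction L with
  | nil => simp
  | cons d L ih => simp [ih, pow_add]

lemma pow_ite_one (z : ℝ) (P : Prop) [Decidable P] :
    z ^ (if P then (1:ℕ) else 0) = 1 + (if P then z - 1 else 0) := by
  split <;> simp

lemma sum_ite_z (z : ℝ) (W : Finset (Fin n)) :
    ∑ v : Fin n, z ^ (if v ∈ W then (1:ℕ) else 0) = n + (z - 1) * W.card := by
  simp only [pow_ite_one]
  rw [Finset.sum_add_distrib]
  rw [Finset.sum_ite_mem]
  simp [mul_comm]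
  ring

lemma sum_ite_z2 (z : ℝ) (V1 V2 : Finset (Fin n)) :
    ∑ v : Fin n, z ^ ((if v ∈ V1 then (1:ℕ) else 0) + (if v ∈ V2 then (1:ℕ) else 0))
      = n + (z - 1) * (V1.card + V2.card) + (z - 1)^2 * (V1 ∩ V2).card := by
  have expand : ∀ v : Fin n,
      z ^ ((if v ∈ V1 then (1:ℕ) else 0) + (if v ∈ V2 then (1:ℕ) else 0))
      = 1 + ((if v ∈ V1 then z - 1 else 0) + (if v ∈ V2 then z - 1 else 0))
        + (if v ∈ V1 ∩ V2 then (z-1)^2 else 0) := by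
    intro v
    rw [pow_add, pow_ite_one, pow_ite_one]
    by_cases h1 : v ∈ V1 <;> by_cases h2 : v ∈ V2 <;>
      simp [h1, h2, Finset.mem_inter] <;> ring
  simp only [expand]
  rw [Finset.sum_add_distrib, Finset.sum_add_distrib, Finset.sum_add_distrib]
  rw [Finset.sum_ite_mem, Finset.sum_ite_mem, Finset.sum_ite_mem]
  simp [mul_comm, mul_add]
  ring

lemma image_update_not_mem (S : Finset U) (x : U) (hx : x ∉ S) (h : U → Fin n) (v : Fin n) :
    S.image (Function.update h x v) = S.image h := by
  apply Finset.image_congr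
  intro y hy
  have hyx : y ≠ x := by rintro rfl; exact hx hy
  exact Function.update_of_ne hyx v h


noncomputable def l2 (A B : Finset U) : List U := (A ∩ B).toList

noncomputable def eInd (B : Finset U) (x : U) (h : U → Fin n) : ℕ := if h x ∈ B.image h then 1 else 0

noncomputable def pf (A B : Finset U) (i : ℕ) : Finset U := ((l2 A B).take i).toFinset

noncomputable def egInd (A B : Finset U) (i : Fin (l2 A B).length) (h : U → Fin n) : ℕ :=
  (if h ((l2 A B).get i) ∈ (B \ A).image h ∪ (pf A B i).image h then 1 else 0) +
  (if h ((l2 A B).get i) ∈ (pf A B i).image h \ (B \ A).image h then 1 else 0)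

noncomputable def Sfun (A B : Finset U) (h : U → Fin n) : ℕ :=
  (∑ x ∈ A \ B, eInd B x h) + ∑ i : Fin (l2 A B).length, egInd A B i h

-- facts
example (A B : Finset U) : (l2 A B).length = (A ∩ B).card := Finset.length_toList _
example (A B : Finset U) : (l2 A B).Nodup := Finset.nodup_toList _
example (A B : Finset U) (x : U) : x ∈ l2 A B ↔ x ∈ A ∩ B := Finset.mem_toList

lemma get_not_mem_take {l : List U} (hl : l.Nodup) (i : Fin l.length) (k : ℕ) (hk : k ≤ i.val) :
    l.get i ∉ (l.take k).toFinset := by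
  intro hmem
  rw [List.mem_toFinset] at hmem
  rw [List.mem_iff_getElem] at hmem
  obtain ⟨j, hj, hje⟩ := hmem
  rw [List.length_take] at hj
  have hj2 : j < l.length := lt_of_lt_of_le (lt_of_lt_of_le hj (min_le_right _ _)) le_rfl
  rw [List.getElem_take] at hje
  have : j = i.val := by
    have h2 : l[j] = l[i.val] := by simpa using hje
    exact (List.Nodup.getElem_inj_iff hl).mp h2
  omega

lemma mem_take_of_lt {l : List U} (i j : Fin l.length) (hij : j.val < i.val) :
    l.get j ∈ (l.take i).toFinset := by
  rw [List.mem_toFinset]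
  rw [List.mem_iff_getElem]
  refine ⟨j.val, ?_, ?_⟩
  · rw [List.length_take]; omega
  · rw [List.getElem_take]; rfl

lemma claim2 (hn : 0 < n) (A B : Finset U) (z β : ℝ) (hz : 1 ≤ z) (hβ : 0 ≤ β)
    (hB : (B.card : ℝ) ≤ β * n) :
    ∑ h : U → Fin n, z ^ Sfun A B h
      ≤ Real.exp ((z - 1) * (β * A.card) + (z ^ 2 - 1) * (β * A.card) / 2)
          * (n : ℝ) ^ (Fintype.card U) := by
  have hz0 : (0:ℝ) < z := lt_of_lt_of_le one_pos hz
  have hn' : (0:ℝ) < n := by exact_mod_cast hn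
  classical
  set m := (l2 A B).length with hm
  set D1 : List (U × ((U → Fin n) → ℝ) × ℝ) :=
    (A \ B).toList.map (fun x => (x, fun h : U → Fin n => z ^ eInd B x h, 1 + (z-1)*β)) with hD1
  set D2 : List (U × ((U → Fin n) → ℝ) × ℝ) :=
    ((List.finRange m).map (fun i => ((l2 A B).get i, fun h : U → Fin n => z ^ egInd A B i h,
      1 + (z-1)*β + (z^2-1)*(i:ℕ)/n))).reverse with hD2
  set D := D1 ++ D2 with hD
  -- Step 1: product of factors equals z ^ Sfun
  have step1 : ∀ h : U → Fin n, (D.map (fun d => d.2.1 h)).prod = z ^ Sfun A B h := by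
    intro h
    rw [hD, List.map_append, List.prod_append, hD1, hD2, List.map_reverse, List.prod_reverse,
      List.map_map, List.map_map]
    have e1 : ((A \ B).toList.map ((fun d : U × ((U → Fin n) → ℝ) × ℝ => d.2.1 h) ∘
        (fun x => (x, fun h : U → Fin n => z ^ eInd B x h, 1 + (z-1)*β)))).prod
        = z ^ (∑ x ∈ A \ B, eInd B x h) := by
      have : ((fun d : U × ((U → Fin n) → ℝ) × ℝ => d.2.1 h) ∘
          (fun x => (x, fun h : U → Fin n => z ^ eInd B x h, 1 + (z-1)*β)))
          = fun x => z ^ eInd B x h := rfl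
      rw [this, list_prod_pow]
      congr 1
      rw [Finset.sum_map_toList]
    have e2 : ((List.finRange m).map ((fun d : U × ((U → Fin n) → ℝ) × ℝ => d.2.1 h) ∘
        (fun i => ((l2 A B).get i, fun h : U → Fin n => z ^ egInd A B i h,
          1 + (z-1)*β + (z^2-1)*(i:ℕ)/n)))).prod
        = z ^ (∑ i : Fin m, egInd A B i h) := by
      have : ((fun d : U × ((U → Fin n) → ℝ) × ℝ => d.2.1 h) ∘
          (fun i : Fin m => ((l2 A B).get i, fun h : U → Fin n => z ^ egInd A B i h,
          1 + (z-1)*β + (z^2-1)*(i:ℕ)/n)))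
          = fun i : Fin m => z ^ egInd A B i h := rfl
      rw [this, list_prod_pow, ← Fin.sum_univ_def]
    rw [e1, e2, ← pow_add]
    rfl
  -- invariance helpers
  have inv1 : ∀ (y x : U), y ∉ B → y ≠ x → ∀ (h : U → Fin n) v,
      z ^ eInd B x (Function.update h y v) = z ^ eInd B x h := by
    intro y x hyB hyx h v
    congr 1
    unfold eInd
    rw [Function.update_of_ne (fun e => hyx e.symm) v h, image_update_not_mem B y hyB h v]
  have inv2 : ∀ (y : U) (i : Fin m), y ≠ (l2 A B).get i → y ∉ B \ A → y ∉ pf A B i →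
      ∀ (h : U → Fin n) v, z ^ egInd A B i (Function.update h y v) = z ^ egInd A B i h := by
    intro y i hy1 hy2 hy3 h v
    congr 1
    unfold egInd
    rw [Function.update_of_ne (fun e => hy1 e.symm) v h,
      image_update_not_mem (B \ A) y hy2 h v, image_update_not_mem (pf A B i) y hy3 h v]
  have hnodup2 : (l2 A B).Nodup := Finset.nodup_toList _
  have hget_mem : ∀ i : Fin m, (l2 A B).get i ∈ A ∩ B := by
    intro i
    have h1 : (l2 A B).get i ∈ l2 A B := by
      simpa using List.get_mem (l2 A B) i.val i.isLt
    unfold l2 at h1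
    rwa [Finset.mem_toList] at h1
  -- hypotheses of iterL
  have h0 : ∀ d ∈ D, ∀ h : U → Fin n, 0 ≤ d.2.1 h := by
    intro d hd h
    rw [hD, List.mem_append] at hd
    rcases hd with hd | hd
    · rw [hD1, List.mem_map] at hd
      obtain ⟨x, _, rfl⟩ := hd
      exact pow_nonneg (le_of_lt hz0) _
    · rw [hD2, List.mem_reverse, List.mem_map] at hd
      obtain ⟨i, _, rfl⟩ := hd
      exact pow_nonneg (le_of_lt hz0) _
  have hk0 : ∀ d ∈ D, 0 ≤ d.2.2 := by
    intro d hd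
    rw [hD, List.mem_append] at hd
    have hz1 : (0:ℝ) ≤ z - 1 := by linarith
    rcases hd with hd | hd
    · rw [hD1, List.mem_map] at hd
      obtain ⟨x, _, rfl⟩ := hd
      simp only
      nlinarith
    · rw [hD2, List.mem_reverse, List.mem_map] at hd
      obtain ⟨i, _, rfl⟩ := hd
      simp only
      have h1 : (0:ℝ) ≤ (z^2-1)*(i:ℕ)/n := by
        apply div_nonneg _ (le_of_lt hn')
        apply mul_nonneg _ (Nat.cast_nonneg _)
        nlinarith
      nlinarith
  have hK : ∀ d ∈ D, ∀ h : U → Fin n,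
      ∑ v : Fin n, d.2.1 (Function.update h d.1 v) ≤ (n : ℝ) * d.2.2 := by
    intro d hd h
    rw [hD, List.mem_append] at hd
    have hz1 : (0:ℝ) ≤ z - 1 := by linarith
    rcases hd with hd | hd
    · rw [hD1, List.mem_map] at hd
      obtain ⟨x, hx, rfl⟩ := hd
      rw [Finset.mem_toList, Finset.mem_sdiff] at hx
      simp only
      have key : ∀ v : Fin n, eInd B x (Function.update h x v)
          = if v ∈ B.image h then 1 else 0 := by
        intro v
        unfold eInd
        rw [Function.update_self, image_update_not_mem B x hx.2 h v]
      simp only [key]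
      rw [sum_ite_z z (B.image h)]
      have hc : ((B.image h).card : ℝ) ≤ β * n := le_trans (by exact_mod_cast Finset.card_image_le) hB
      nlinarith
    · rw [hD2, List.mem_reverse, List.mem_map] at hd
      obtain ⟨i, _, rfl⟩ := hd
      simp only
      have hai : (l2 A B).get i ∈ A ∩ B := hget_mem i
      have hnB : (l2 A B).get i ∉ B \ A := by
        rw [Finset.mem_sdiff]
        rw [Finset.mem_inter] at hai
        exact fun hc => hc.2 hai.1
      have hnpf : (l2 A B).get i ∉ pf A B i := get_not_mem_take hnodup2 i i le_rfl
      have key : ∀ v : Fin n, egInd A B i (Function.update h ((l2 A B).get i) v)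
          = (if v ∈ (B \ A).image h ∪ (pf A B i).image h then 1 else 0)
            + (if v ∈ (pf A B i).image h \ (B \ A).image h then 1 else 0) := by
        intro v
        unfold egInd
        rw [Function.update_self, image_update_not_mem (B \ A) _ hnB h v,
          image_update_not_mem (pf A B i) _ hnpf h v]
      simp only [key]
      rw [sum_ite_z2 z _ _]
      have hpfc : ((pf A B i).card : ℝ) ≤ (i : ℕ) := by
        have h1 : (pf A B i).card ≤ ((l2 A B).take i).length := List.toFinset_card_le _
        have h2 : ((l2 A B).take i).length ≤ i := by
          rw [List.length_take]; exact min_le_left _ _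
        exact_mod_cast le_trans h1 h2
      have hV1 : (((B \ A).image h ∪ (pf A B i).image h).card : ℝ) ≤ β * n + (i:ℕ) := by
        have h1 : ((B \ A).image h ∪ (pf A B i).image h).card
            ≤ ((B \ A).image h).card + ((pf A B i).image h).card := Finset.card_union_le _ _
        have h2 : ((B \ A).image h).card ≤ B.card := le_trans Finset.card_image_le
          (Finset.card_le_card (Finset.sdiff_subset))
        have h3 : (((pf A B i).image h).card : ℝ) ≤ (i:ℕ) :=
          le_trans (by exact_mod_cast (Finset.card_image_le (s := pf A B i) (f := h))) hpfc
        have h4 : (((B \ A).image h).card : ℝ) ≤ β * n := le_trans (by exact_mod_cast h2) hB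
        calc (((B \ A).image h ∪ (pf A B i).image h).card : ℝ)
            ≤ (((B \ A).image h).card : ℝ) + (((pf A B i).image h).card : ℝ) := by exact_mod_cast h1
          _ ≤ β * n + (i:ℕ) := add_le_add h4 h3
      have hV2 : (((pf A B i).image h \ (B \ A).image h).card : ℝ) ≤ (i:ℕ) := by
        have h1 : ((pf A B i).image h \ (B \ A).image h).card ≤ ((pf A B i).image h).card :=
          Finset.card_le_card (Finset.sdiff_subset)
        have h3 : (((pf A B i).image h).card : ℝ) ≤ (i:ℕ) :=
          le_trans (by exact_mod_cast (Finset.card_image_le (s := pf A B i) (f := h))) hpfc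
        exact le_trans (by exact_mod_cast h1) h3
      have hV12 : ((((B \ A).image h ∪ (pf A B i).image h) ∩
          ((pf A B i).image h \ (B \ A).image h)).card : ℝ) ≤ (i:ℕ) := by
        have h1 : (((B \ A).image h ∪ (pf A B i).image h) ∩
            ((pf A B i).image h \ (B \ A).image h)).card
            ≤ ((pf A B i).image h \ (B \ A).image h).card :=
          Finset.card_le_card (Finset.inter_subset_right)
        exact le_trans (by exact_mod_cast h1) hV2
      have hrhs : (n:ℝ) * (1 + (z-1)*β + (z^2-1)*(i:ℕ)/n) = n + (z-1)*(β*n) + (z^2-1)*(i:ℕ) := by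
        field_simp
      rw [hrhs]
      nlinarith [hV1, hV2, hV12, sq_nonneg (z-1), Nat.cast_nonneg (α := ℝ) (i : ℕ)]
  have hdep : D.Pairwise (fun d e => ∀ (h : U → Fin n) v,
      e.2.1 (Function.update h d.1 v) = e.2.1 h) := by
    rw [hD, List.pairwise_append]
    refine ⟨?_, ?_, ?_⟩
    · rw [hD1, List.pairwise_map]
      refine List.Pairwise.imp_of_mem ?_ (Finset.nodup_toList (A \ B))
      intro a b ha hb hab
      rw [Finset.mem_toList, Finset.mem_sdiff] at ha hb
      intro h v
      exact inv1 a b ha.2 hab h v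
    · rw [hD2, List.pairwise_reverse, List.pairwise_map]
      refine List.Pairwise.imp_of_mem ?_ (List.pairwise_lt_finRange m)
      intro i j _ _ hij
      intro h v
      apply inv2
      · intro e
        have := (List.Nodup.getElem_inj_iff hnodup2).mp e
        omega
      · have haj : (l2 A B).get j ∈ A ∩ B := hget_mem j
        rw [Finset.mem_sdiff]
        rw [Finset.mem_inter] at haj
        exact fun hc => hc.2 haj.1
      · exact get_not_mem_take hnodup2 j i (le_of_lt hij)
    · intro d hd e he
      rw [hD1, List.mem_map] at hd
      obtain ⟨x, hx, rfl⟩ := hd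
      rw [Finset.mem_toList, Finset.mem_sdiff] at hx
      rw [hD2, List.mem_reverse, List.mem_map] at he
      obtain ⟨i, _, rfl⟩ := he
      intro h v
      apply inv2
      · intro e
        apply hx.2
        have := hget_mem i
        rw [← e, Finset.mem_inter] at this
        exact this.2
      · rw [Finset.mem_sdiff]; exact fun hc => hx.2 hc.1
      · intro hc
        apply hx.2
        unfold pf at hc
        rw [List.mem_toFinset] at hc
        have h9 : x ∈ l2 A B := List.mem_of_mem_take hc
        unfold l2 at h9
        rw [Finset.mem_toList, Finset.mem_inter] at h9
        exact h9.2
  have main := iterL hn D h0 hk0 hK hdep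
  have hz1 : (0:ℝ) ≤ z - 1 := by linarith
  have hz2 : (0:ℝ) ≤ z^2 - 1 := by nlinarith
  have b1nn : (0:ℝ) ≤ (z-1)*β := mul_nonneg hz1 hβ
  -- rewrite LHS of main
  rw [Finset.sum_congr rfl (fun h _ => step1 h)] at main
  refine le_trans main ?_
  apply mul_le_mul_of_nonneg_right _ (by positivity)
  -- compute the kappa product
  have hPsplit : (D.map (fun d => d.2.2)).prod
      = (1 + (z-1)*β) ^ (A \ B).card * ∏ i : Fin m, (1 + (z-1)*β + (z^2-1)*(i:ℕ)/n) := by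
    rw [hD, List.map_append, List.prod_append, hD1, hD2, List.map_reverse, List.prod_reverse,
      List.map_map, List.map_map]
    have e1 : ((fun d : U × ((U → Fin n) → ℝ) × ℝ => d.2.2) ∘
        (fun x => (x, fun h : U → Fin n => z ^ eInd B x h, 1 + (z-1)*β)))
        = fun _ : U => 1 + (z-1)*β := rfl
    have e2 : ((fun d : U × ((U → Fin n) → ℝ) × ℝ => d.2.2) ∘
        (fun i : Fin m => ((l2 A B).get i, fun h : U → Fin n => z ^ egInd A B i h,
          1 + (z-1)*β + (z^2-1)*(i:ℕ)/n)))
        = fun i : Fin m => 1 + (z-1)*β + (z^2-1)*(i:ℕ)/n := rfl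
    rw [e1, e2, List.map_const', List.prod_replicate, Finset.length_toList, ← Fin.prod_univ_def]
  rw [hPsplit]
  -- bound each part by exponentials
  have hpart1 : (1 + (z-1)*β) ^ (A \ B).card ≤ Real.exp (((A \ B).card : ℕ) * ((z-1)*β)) := by
    rw [Real.exp_nat_mul]
    apply pow_le_pow_left₀ (by linarith)
    linarith [Real.add_one_le_exp ((z-1)*β)]
  have hci : ∀ i : Fin m, (0:ℝ) ≤ (z^2-1)*(i:ℕ)/n :=
    fun i => div_nonneg (mul_nonneg hz2 (Nat.cast_nonneg _)) (le_of_lt hn')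
  have hpart2 : (∏ i : Fin m, (1 + (z-1)*β + (z^2-1)*(i:ℕ)/n))
      ≤ Real.exp (∑ i : Fin m, ((z-1)*β + (z^2-1)*(i:ℕ)/n)) := by
    rw [Real.exp_sum]
    apply Finset.prod_le_prod
    · intro i _
      have := hci i
      nlinarith
    · intro i _
      have h1 := Real.add_one_le_exp ((z-1)*β + (z^2-1)*(i:ℕ)/n)
      linarith
  have hsum2 : (∑ i : Fin m, ((z-1)*β + (z^2-1)*(i:ℕ)/n))
      = m * ((z-1)*β) + (z^2-1)/n * (∑ i : Fin m, ((i:ℕ):ℝ)) := by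
    rw [Finset.sum_add_distrib]
    congr 1
    · rw [Finset.sum_const]
      simp [Finset.card_univ, mul_comm]
    · rw [Finset.mul_sum]
      refine Finset.sum_congr rfl fun i _ => ?_
      ring
  have hSI : (∑ i : Fin m, ((i:ℕ):ℝ)) * 2 ≤ (m:ℝ) * m := by
    rw [Fin.sum_univ_eq_sum_range (fun i => (i:ℝ)) m]
    have h1 : (∑ i ∈ Finset.range m, i) * 2 = m * (m - 1) := Finset.sum_range_id_mul_two m
    have h2 : (∑ i ∈ Finset.range m, i) * 2 ≤ m * m := by
      rw [h1]; exact Nat.mul_le_mul_left m (Nat.sub_le m 1)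
    calc (∑ i ∈ Finset.range m, (i:ℝ)) * 2 = (((∑ i ∈ Finset.range m, i) * 2 : ℕ) : ℝ) := by
          push_cast; ring
      _ ≤ (((m * m : ℕ)) : ℝ) := by exact_mod_cast h2
      _ = (m:ℝ) * m := by push_cast; ring
  have hmA : (m:ℝ) ≤ (A.card : ℝ) := by
    have : (A ∩ B).card ≤ A.card := Finset.card_le_card (Finset.inter_subset_left)
    have hm' : m = (A ∩ B).card := by rw [hm]; unfold l2; exact Finset.length_toList _
    rw [hm']; exact_mod_cast this
  have hmB : (m:ℝ) ≤ β * n := by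
    have : (A ∩ B).card ≤ B.card := Finset.card_le_card (Finset.inter_subset_right)
    have hm' : m = (A ∩ B).card := by rw [hm]; unfold l2; exact Finset.length_toList _
    rw [hm']
    exact le_trans (by exact_mod_cast this) hB
  have hcards : ((A \ B).card : ℝ) + m = (A.card : ℝ) := by
    have hm' : m = (A ∩ B).card := by rw [hm]; unfold l2; exact Finset.length_toList _
    rw [hm']
    exact_mod_cast congrArg (Nat.cast (R := ℝ)) (Finset.card_sdiff_add_card_inter A B)
  calc (1 + (z-1)*β) ^ (A \ B).card * ∏ i : Fin m, (1 + (z-1)*β + (z^2-1)*(i:ℕ)/n)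
      ≤ Real.exp (((A \ B).card : ℕ) * ((z-1)*β))
        * Real.exp (m * ((z-1)*β) + (z^2-1)/n * (∑ i : Fin m, ((i:ℕ):ℝ))) := by
        apply mul_le_mul hpart1 (by rw [← hsum2]; exact hpart2) _ (le_of_lt (Real.exp_pos _))
        apply Finset.prod_nonneg
        intro i _
        have := hci i
        nlinarith
    _ = Real.exp (((A \ B).card : ℝ) * ((z-1)*β) + m * ((z-1)*β)
          + (z^2-1)/n * (∑ i : Fin m, ((i:ℕ):ℝ))) := by
        rw [← Real.exp_add]
        ring_nf
    _ ≤ Real.exp ((z - 1) * (β * A.card) + (z ^ 2 - 1) * (β * A.card) / 2) := by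
        apply Real.exp_le_exp.mpr
        have e1 : ((A \ B).card : ℝ) * ((z-1)*β) + m * ((z-1)*β) = (z-1) * (β * A.card) := by
          rw [← add_mul, hcards]; ring
        rw [e1]
        have hSInn : (0:ℝ) ≤ ∑ i : Fin m, ((i:ℕ):ℝ) :=
          Finset.sum_nonneg fun i _ => Nat.cast_nonneg _
        have key : (z^2-1)/n * (∑ i : Fin m, ((i:ℕ):ℝ)) ≤ (z ^ 2 - 1) * (β * A.card) / 2 := by
          have hmm : (m:ℝ) * m ≤ β * n * A.card := by
            nlinarith [hmA, hmB, Nat.cast_nonneg (α := ℝ) m]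
          have h2 : (∑ i : Fin m, ((i:ℕ):ℝ)) * 2 ≤ β * n * A.card := le_trans hSI hmm
          rw [div_mul_eq_mul_div, div_le_div_iff₀ hn' (by norm_num : (0:ℝ) < 2)]
          nlinarith [h2, hz2, hn', hSInn]
        linarith


lemma l2_get_mem (A B : Finset U) (i : Fin (l2 A B).length) : (l2 A B).get i ∈ A ∩ B := by
  have h1 : (l2 A B).get i ∈ l2 A B := by simpa using List.get_mem (l2 A B) i.val i.isLt
  unfold l2 at h1
  rwa [Finset.mem_toList] at h1

lemma claim1 (A B : Finset U) (h : U → Fin n) :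
    (A.filter fun x => h x ∈ (B.erase x).image h).card ≤ Sfun A B h := by
  classical
  rw [Finset.card_filter]
  have hsplit := (Finset.sum_union (s₁ := A \ B) (s₂ := A ∩ B)
    (f := fun x => if h x ∈ (B.erase x).image h then (1:ℕ) else 0)
    (Finset.disjoint_sdiff_inter A B)).symm
  rw [Finset.sdiff_union_inter] at hsplit
  rw [← hsplit]
  unfold Sfun
  have part1 : ∑ x ∈ A \ B, (if h x ∈ (B.erase x).image h then (1:ℕ) else 0)
      = ∑ x ∈ A \ B, eInd B x h := by
    refine Finset.sum_congr rfl fun x hx => ?_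
    rw [Finset.mem_sdiff] at hx
    unfold eInd
    rw [Finset.erase_eq_of_notMem hx.2]
  have hnodup : (l2 A B).Nodup := Finset.nodup_toList _
  have part2 : ∑ x ∈ A ∩ B, (if h x ∈ (B.erase x).image h then (1:ℕ) else 0)
      ≤ ∑ i : Fin (l2 A B).length, egInd A B i h := by
    have reindex : ∑ x ∈ A ∩ B, (if h x ∈ (B.erase x).image h then (1:ℕ) else 0)
        = ∑ i : Fin (l2 A B).length,
            (if h ((l2 A B).get i) ∈ (B.erase ((l2 A B).get i)).image h then (1:ℕ) else 0) := by
      rw [← Finset.sum_map_toList, Fin.sum_univ_def]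
      show ((l2 A B).map _).sum = _
      congr 1
      conv_lhs => rw [← List.map_get_finRange (l2 A B)]
      rw [List.map_map]
      rfl
    rw [reindex]
    set Bad : Finset (Fin (l2 A B).length) := Finset.univ.filter
      (fun i => h ((l2 A B).get i) ∈ (B.erase ((l2 A B).get i)).image h ∧
        h ((l2 A B).get i) ∉ (B \ A).image h ∪ (pf A B i).image h) with hBad
    set Good : Finset (Fin (l2 A B).length) := Finset.univ.filter
      (fun i => h ((l2 A B).get i) ∈ (pf A B i).image h \ (B \ A).image h) with hGood
    have pw : ∀ i : Fin (l2 A B).length,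
        (if h ((l2 A B).get i) ∈ (B.erase ((l2 A B).get i)).image h then (1:ℕ) else 0)
        ≤ (if h ((l2 A B).get i) ∈ (B \ A).image h ∪ (pf A B i).image h then (1:ℕ) else 0)
          + (if i ∈ Bad then 1 else 0) := by
      intro i
      by_cases h1 : h ((l2 A B).get i) ∈ (B.erase ((l2 A B).get i)).image h
      · rw [if_pos h1]
        by_cases h2 : h ((l2 A B).get i) ∈ (B \ A).image h ∪ (pf A B i).image h
        · rw [if_pos h2]; omega
        · have hib : i ∈ Bad := by
            rw [hBad, Finset.mem_filter]
            exact ⟨Finset.mem_univ _, h1, h2⟩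
          rw [if_pos hib]; omega
      · rw [if_neg h1]; omega
    have distinct : ∀ i j : Fin (l2 A B).length, i < j → j ∈ Bad →
        h ((l2 A B).get i) ≠ h ((l2 A B).get j) := by
      intro i j hij hjBad heq
      rw [hBad, Finset.mem_filter] at hjBad
      apply hjBad.2.2
      apply Finset.mem_union_right
      rw [← heq]
      apply Finset.mem_image_of_mem
      unfold pf
      exact mem_take_of_lt j i hij
    have hBadGood : Bad.card ≤ Good.card := by
      have hS : ∀ i ∈ Bad, (Finset.univ.filter
          (fun j => i < j ∧ h ((l2 A B).get j) = h ((l2 A B).get i))).Nonempty := by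
        intro i hiBad
        rw [hBad, Finset.mem_filter] at hiBad
        obtain ⟨y, hy, hyeq⟩ := Finset.mem_image.mp hiBad.2.1
        rw [Finset.mem_erase] at hy
        by_cases hyA : y ∈ A
        · have hyl : y ∈ l2 A B := by
            unfold l2; rw [Finset.mem_toList, Finset.mem_inter]
            exact ⟨hyA, hy.2⟩
          obtain ⟨j, rfl⟩ := List.mem_iff_get.mp hyl
          have hji : j ≠ i := by
            intro e; apply hy.1; rw [e]
          rcases lt_or_gt_of_ne hji with hlt | hgt
          · exfalso
            apply hiBad.2.2
            apply Finset.mem_union_right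
            rw [← hyeq]
            apply Finset.mem_image_of_mem
            unfold pf
            exact mem_take_of_lt i j hlt
          · exact ⟨j, by rw [Finset.mem_filter]; exact ⟨Finset.mem_univ _, hgt, hyeq⟩⟩
        · exfalso
          apply hiBad.2.2
          apply Finset.mem_union_left
          rw [← hyeq]
          apply Finset.mem_image_of_mem
          rw [Finset.mem_sdiff]
          exact ⟨hy.2, hyA⟩
      set f : Fin (l2 A B).length → Fin (l2 A B).length := fun i =>
        if H : (Finset.univ.filter
            (fun j => i < j ∧ h ((l2 A B).get j) = h ((l2 A B).get i))).Nonempty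
        then (Finset.univ.filter
            (fun j => i < j ∧ h ((l2 A B).get j) = h ((l2 A B).get i))).min' H
        else i with hf
      have hfspec : ∀ i ∈ Bad, i < f i ∧ h ((l2 A B).get (f i)) = h ((l2 A B).get i) := by
        intro i hiBad
        have H := hS i hiBad
        rw [hf]
        simp only [dif_pos H]
        have hm := Finset.min'_mem _ H
        rw [Finset.mem_filter] at hm
        exact hm.2
      apply Finset.card_le_card_of_injOn f
      · intro i hiBad
        obtain ⟨hlt, heq⟩ := hfspec i hiBad
        simp only [hBad, Finset.mem_coe, Finset.mem_filter] at hiBad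
        rw [Finset.mem_coe, hGood, Finset.mem_filter]
        refine ⟨Finset.mem_univ _, ?_⟩
        rw [Finset.mem_sdiff]
        constructor
        · rw [heq]
          apply Finset.mem_image_of_mem
          unfold pf
          exact mem_take_of_lt (f i) i hlt
        · rw [heq]
          intro hc'
          exact hiBad.2.2 (Finset.mem_union_left _ hc')
      · intro i1 h1 i2 h2 hf12
        by_contra hne
        have h1' : i1 ∈ Bad := h1
        have h2' : i2 ∈ Bad := h2
        obtain ⟨ha1, he1⟩ := hfspec i1 h1'
        obtain ⟨ha2, he2⟩ := hfspec i2 h2'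
        have heq2 : h ((l2 A B).get i1) = h ((l2 A B).get i2) := by
          rw [← he1, hf12, he2]
        rcases lt_or_gt_of_ne hne with hlt | hgt
        · exact distinct i1 i2 hlt h2' heq2
        · exact distinct i2 i1 hgt h1' heq2.symm
    have hBadCard : ∑ i : Fin (l2 A B).length, (if i ∈ Bad then (1:ℕ) else 0) = Bad.card := by
      have e : Finset.univ.filter (fun i : Fin (l2 A B).length => i ∈ Bad) = Bad := by
        rw [Finset.filter_mem_eq_inter, Finset.univ_inter]
      conv_rhs => rw [← e]
      rw [Finset.card_filter]
    have hGoodCard : (Good.card : ℕ) = ∑ i : Fin (l2 A B).length,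
        (if h ((l2 A B).get i) ∈ (pf A B i).image h \ (B \ A).image h then (1:ℕ) else 0) := by
      rw [hGood, Finset.card_filter]
    calc ∑ i : Fin (l2 A B).length,
          (if h ((l2 A B).get i) ∈ (B.erase ((l2 A B).get i)).image h then (1:ℕ) else 0)
        ≤ ∑ i : Fin (l2 A B).length,
            ((if h ((l2 A B).get i) ∈ (B \ A).image h ∪ (pf A B i).image h then (1:ℕ) else 0)
              + (if i ∈ Bad then 1 else 0)) := Finset.sum_le_sum fun i _ => pw i
      _ = (∑ i : Fin (l2 A B).length,
            (if h ((l2 A B).get i) ∈ (B \ A).image h ∪ (pf A B i).image h then (1:ℕ) else 0))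
          + Bad.card := by rw [Finset.sum_add_distrib, hBadCard]
      _ ≤ (∑ i : Fin (l2 A B).length,
            (if h ((l2 A B).get i) ∈ (B \ A).image h ∪ (pf A B i).image h then (1:ℕ) else 0))
          + Good.card := Nat.add_le_add_left hBadGood _
      _ = ∑ i : Fin (l2 A B).length, egInd A B i h := by
          rw [hGoodCard, ← Finset.sum_add_distrib]
          exact Finset.sum_congr rfl fun i _ => rfl
  exact add_le_add (le_of_eq part1) part2

lemma card_fun_space : ∑ h : U → Fin n, (1:ℝ) = (n:ℝ) ^ (Fintype.card U) := by
  rw [Finset.sum_const, Finset.card_univ, Fintype.card_fun, Fintype.card_fin, nsmul_eq_mul,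
    mul_one]
  push_cast
  ring

lemma pair_count (hn : 0 < n) (x y : U) (hxy : y ≠ x) :
    ∑ h : U → Fin n, (if h x = h y then (1:ℝ) else 0) ≤ (n:ℝ) ^ (Fintype.card U) / n := by
  have hn' : (0:ℝ) < n := by exact_mod_cast hn
  have hpeel := peel (n := n) x (fun _ => (1:ℝ)) (fun h => if h x = h y then (1:ℝ) else 0) 1
    (fun _ _ => rfl) (fun _ => zero_le_one) ?_
  · rw [le_div_iff₀ hn']
    calc (∑ h : U → Fin n, (if h x = h y then (1:ℝ) else 0)) * n
        = (n:ℝ) * ∑ h : U → Fin n, (1:ℝ) * (if h x = h y then (1:ℝ) else 0) := by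
          rw [mul_comm]
          congr 1
          exact Finset.sum_congr rfl fun h _ => (one_mul _).symm
      _ ≤ 1 * ∑ h : U → Fin n, (1:ℝ) := hpeel
      _ = (n:ℝ) ^ (Fintype.card U) := by rw [one_mul, card_fun_space]
  · intro h
    have : ∀ v : Fin n, (if Function.update h x v x = Function.update h x v y then (1:ℝ) else 0)
        = (if v = h y then (1:ℝ) else 0) := by
      intro v
      rw [Function.update_self, Function.update_of_ne hxy]
    rw [Finset.sum_congr rfl fun v _ => this v]
    rw [Finset.sum_ite_eq' Finset.univ (h y) (fun _ => (1:ℝ))]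
    simp

lemma markov_bound (hn : 0 < n) (A B : Finset U) :
    ∑ h : U → Fin n, ((A.filter fun x => h x ∈ (B.erase x).image h).card : ℝ)
      ≤ (A.card : ℝ) * B.card * (n:ℝ) ^ (Fintype.card U) / n := by
  have hn' : (0:ℝ) < n := by exact_mod_cast hn
  have step1 : ∀ h : U → Fin n, ((A.filter fun x => h x ∈ (B.erase x).image h).card : ℝ)
      = ∑ x ∈ A, (if h x ∈ (B.erase x).image h then (1:ℝ) else 0) := by
    intro h
    rw [Finset.card_filter]
    push_cast
    exact Finset.sum_congr rfl fun x _ => by split <;> norm_num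
  calc ∑ h : U → Fin n, ((A.filter fun x => h x ∈ (B.erase x).image h).card : ℝ)
      = ∑ x ∈ A, ∑ h : U → Fin n, (if h x ∈ (B.erase x).image h then (1:ℝ) else 0) := by
        rw [Finset.sum_congr rfl fun h _ => step1 h, Finset.sum_comm]
    _ ≤ ∑ x ∈ A, ((B.card : ℝ) * ((n:ℝ) ^ (Fintype.card U) / n)) := by
        apply Finset.sum_le_sum
        intro x _
        calc ∑ h : U → Fin n, (if h x ∈ (B.erase x).image h then (1:ℝ) else 0)
            ≤ ∑ h : U → Fin n, ∑ y ∈ B.erase x, (if h x = h y then (1:ℝ) else 0) := by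
              apply Finset.sum_le_sum
              intro h _
              by_cases hm : h x ∈ (B.erase x).image h
              · obtain ⟨y, hy, hyeq⟩ := Finset.mem_image.mp hm
                rw [if_pos hm]
                calc (1:ℝ) = (if h x = h y then (1:ℝ) else 0) := by rw [if_pos hyeq.symm]
                  _ ≤ ∑ w ∈ B.erase x, (if h x = h w then (1:ℝ) else 0) :=
                      Finset.single_le_sum (f := fun w => if h x = h w then (1:ℝ) else 0)
                        (fun i _ => by positivity) hy
              · rw [if_neg hm]
                positivity
          _ = ∑ y ∈ B.erase x, ∑ h : U → Fin n, (if h x = h y then (1:ℝ) else 0) :=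
              Finset.sum_comm
          _ ≤ ∑ y ∈ B.erase x, ((n:ℝ) ^ (Fintype.card U) / n) := by
              apply Finset.sum_le_sum
              intro y hy
              exact pair_count hn x y (Finset.ne_of_mem_erase hy)
          _ = (B.erase x).card * ((n:ℝ) ^ (Fintype.card U) / n) := by
              rw [Finset.sum_const, nsmul_eq_mul]
          _ ≤ (B.card : ℝ) * ((n:ℝ) ^ (Fintype.card U) / n) := by
              apply mul_le_mul_of_nonneg_right _ (by positivity)
              exact_mod_cast Finset.card_le_card (Finset.erase_subset x B)
    _ = (A.card : ℝ) * B.card * (n:ℝ) ^ (Fintype.card U) / n := by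
        rw [Finset.sum_const, nsmul_eq_mul]
        ring

end RFRAux

/-- **Claim 1 of Halldórsson–Nolin–Tonoyan.** There are universal constants `C, c > 0`
such that: for all `α, β, ν ∈ (0,1)` with `α ≤ β` and every integer
`λ ≥ C·α⁻¹·β⁻²·log(1/ν)`, there is an integer `σ` with
`c·β⁻²·α⁻¹·log(1/ν) ≤ σ ≤ λ` such that for every finite set `U` and all `A, B ⊆ U` with
`|A| ≥ αλ` and `|A|, |B| ≤ βλ`, a uniformly random function `h : U → [λ]` satisfies,
with probability at least `1 − ν/2`,
`|{x ∈ A : h(x) ∈ [σ] and h(x) ∉ h(B \ {x})}| ≥ (σ|A|/λ)(1 − 3β)`. -/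
theorem random_function_representative :
    ∃ C c : ℝ, 0 < C ∧ 0 < c ∧
      ∀ α β ν : ℝ, 0 < α → α < 1 → 0 < β → β < 1 → 0 < ν → ν < 1 → α ≤ β →
      ∀ lam : ℕ, C * α⁻¹ * (β ^ 2)⁻¹ * Real.log (1 / ν) ≤ lam →
      ∃ σ : ℕ, c * (β ^ 2)⁻¹ * α⁻¹ * Real.log (1 / ν) ≤ σ ∧ σ ≤ lam ∧
        ∀ (U : Type) [Fintype U] [DecidableEq U], ∀ A B : Finset U,
          α * lam ≤ (A.card : ℝ) → (A.card : ℝ) ≤ β * lam → (B.card : ℝ) ≤ β * lam →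
          (1 - ν / 2) * (Fintype.card (U → Fin lam) : ℝ) ≤
            (((Finset.univ : Finset (U → Fin lam)).filter fun h =>
                (σ : ℝ) * A.card / lam * (1 - 3 * β) ≤
                  ((A.filter fun z => (h z).val < σ ∧ h z ∉ (B.erase z).image h).card : ℝ)).card : ℝ) := by
  classical
  refine ⟨50, 50, by norm_num, by norm_num, ?_⟩
  intro α β ν hα0 hα1 hβ0 hβ1 hν0 hν1 hαβ lam hlam
  have hL : 0 < Real.log (1 / ν) := by
    apply Real.log_pos
    rw [lt_div_iff₀ hν0]
    linarith
  have hlampos : (0:ℝ) < lam := by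
    have h1 : (0:ℝ) < 50 * α⁻¹ * (β ^ 2)⁻¹ * Real.log (1 / ν) := by positivity
    linarith
  have hn : 0 < lam := by exact_mod_cast hlampos
  refine ⟨lam, ?_, le_rfl, ?_⟩
  · calc (50:ℝ) * (β ^ 2)⁻¹ * α⁻¹ * Real.log (1 / ν)
        = 50 * α⁻¹ * (β ^ 2)⁻¹ * Real.log (1 / ν) := by ring
      _ ≤ lam := hlam
  intro U _ _ A B hAge hAle hBle
  set Nr : ℝ := ((Fintype.card (U → Fin lam) : ℕ) : ℝ) with hNr
  have hNcard : Nr = (lam:ℝ) ^ (Fintype.card U) := by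
    rw [hNr, Fintype.card_fun, Fintype.card_fin]
    push_cast
    ring
  have hNnn : (0:ℝ) ≤ Nr := by rw [hNcard]; positivity
  -- simplify the inner filter
  have hfilter : ∀ h : U → Fin lam,
      (A.filter fun z => (h z).val < lam ∧ h z ∉ (B.erase z).image h)
        = (A.filter fun z => h z ∉ (B.erase z).image h) := by
    intro h
    apply Finset.filter_congr
    intro z _
    exact and_iff_right (h z).isLt
  by_cases hb3 : 1/3 ≤ β
  · -- trivial case: threshold nonpositive
    have hall : (Finset.univ : Finset (U → Fin lam)).filter (fun h =>
        (lam : ℝ) * A.card / lam * (1 - 3 * β) ≤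
          ((A.filter fun z => (h z).val < lam ∧ h z ∉ (B.erase z).image h).card : ℝ))
        = Finset.univ := by
      apply Finset.filter_true_of_mem
      intro h _
      have h1 : (lam : ℝ) * A.card / lam * (1 - 3 * β) ≤ 0 := by
        apply mul_nonpos_of_nonneg_of_nonpos
        · positivity
        · linarith
      exact le_trans h1 (by positivity)
    rw [hall, Finset.card_univ]
    nlinarith
  push_neg at hb3
  -- main case
  set Y : (U → Fin lam) → ℕ := fun h => (A.filter fun z => h z ∈ (B.erase z).image h).card
    with hY
  set P : (U → Fin lam) → Prop := fun h =>
      (lam : ℝ) * A.card / lam * (1 - 3 * β) ≤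
        ((A.filter fun z => (h z).val < lam ∧ h z ∉ (B.erase z).image h).card : ℝ) with hP
  set BadH : Finset (U → Fin lam) := Finset.univ.filter (fun h => ¬ P h) with hBadH
  have hsplitcard : ((Finset.univ.filter P).card : ℝ) + (BadH.card : ℝ) = Nr := by
    rw [hBadH, hNr]
    rw [← Finset.card_univ (α := U → Fin lam)]
    exact_mod_cast congrArg (Nat.cast (R := ℝ))
      (Finset.card_filter_add_card_filter_not (s := Finset.univ) P)
  have hYbound : ∀ h, h ∈ BadH → 3 * (β * A.card) < (Y h : ℝ) := by
    intro h hh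
    rw [hBadH, Finset.mem_filter] at hh
    have hnp := hh.2
    rw [hP] at hnp
    push_neg at hnp
    rw [hfilter h] at hnp
    have hYc : ((A.filter fun z => h z ∉ (B.erase z).image h).card : ℝ) = A.card - Y h := by
      have := Finset.card_filter_add_card_filter_not (s := A)
        (fun z => h z ∈ (B.erase z).image h)
      rw [hY]
      have hcast : ((A.filter fun z => h z ∈ (B.erase z).image h).card : ℝ)
          + ((A.filter fun z => ¬ (h z ∈ (B.erase z).image h)).card : ℝ) = (A.card : ℝ) := by
        exact_mod_cast congrArg (Nat.cast (R := ℝ)) this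
      simp only [not_not] at hcast ⊢
      linarith [hcast]
    rw [hYc] at hnp
    have hθ : (lam : ℝ) * A.card / lam * (1 - 3 * β) = A.card * (1 - 3*β) := by
      field_simp
    rw [hθ] at hnp
    nlinarith
  -- it suffices to bound the bad set
  have main : (BadH.card : ℝ) ≤ ν / 2 * Nr → (1 - ν / 2) * Nr ≤ ((Finset.univ.filter P).card : ℝ) := by
    intro hb
    nlinarith [hsplitcard]
  refine main ?_
  have hμpos : 0 < β * (A.card : ℝ) := by
    have : (0:ℝ) < α * lam := by positivity
    nlinarith
  by_cases hν23 : ν ≤ 2/3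
  · -- Chernoff case
    set z : ℝ := 6/5 with hzdef
    have hz : (1:ℝ) ≤ z := by norm_num
    set μ : ℝ := β * A.card with hμ
    have hμnn : 0 ≤ μ := le_of_lt hμpos
    have hlogz : 1/6 ≤ Real.log z := by
      have h1 : Real.log (5/6 : ℝ) ≤ 5/6 - 1 := Real.log_le_sub_one_of_pos (by norm_num)
      have h2 : z = ((5:ℝ)/6)⁻¹ := by norm_num
      rw [h2, Real.log_inv]
      linarith
    set L : ℝ := Real.log (1 / ν) with hLdef
    set E2 : ℝ := (z - 1) * (β * A.card) + (z ^ 2 - 1) * (β * A.card) / 2 with hE2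
    have stepA : (BadH.card : ℝ) * Real.exp (Real.log z * (3 * μ))
        ≤ ∑ h ∈ BadH, (z : ℝ) ^ (Y h) := by
      calc (BadH.card : ℝ) * Real.exp (Real.log z * (3 * μ))
          = ∑ _h ∈ BadH, Real.exp (Real.log z * (3 * μ)) := by
            rw [Finset.sum_const, nsmul_eq_mul]
        _ ≤ ∑ h ∈ BadH, (z : ℝ) ^ (Y h) := by
            apply Finset.sum_le_sum
            intro h hh
            have h1 : Real.exp (Real.log z * (3 * μ)) = z ^ ((3 * μ : ℝ)) :=
              (Real.rpow_def_of_pos (by norm_num) _).symm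
            have h2 : (z:ℝ) ^ ((3 * μ : ℝ)) ≤ z ^ (((Y h : ℕ) : ℝ)) :=
              Real.rpow_le_rpow_of_exponent_le hz (le_of_lt (hYbound h hh))
            rw [h1]
            calc (z:ℝ) ^ ((3 * μ : ℝ)) ≤ z ^ (((Y h : ℕ) : ℝ)) := h2
              _ = z ^ (Y h) := Real.rpow_natCast z (Y h)
    have stepB : ∑ h ∈ BadH, (z : ℝ) ^ (Y h) ≤ ∑ h : U → Fin lam, (z:ℝ) ^ (Sfun A B h) := by
      calc ∑ h ∈ BadH, (z : ℝ) ^ (Y h) ≤ ∑ h ∈ BadH, (z:ℝ) ^ (Sfun A B h) := by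
            apply Finset.sum_le_sum
            intro h _
            exact pow_le_pow_right₀ hz (claim1 A B h)
        _ ≤ ∑ h : U → Fin lam, (z:ℝ) ^ (Sfun A B h) := by
            apply Finset.sum_le_sum_of_subset_of_nonneg (Finset.subset_univ _)
            intro h _ _
            positivity
    have stepC : ∑ h : U → Fin lam, (z:ℝ) ^ (Sfun A B h) ≤ Real.exp E2 * Nr := by
      rw [hE2, hNcard]
      exact claim2 hn A B z β hz (le_of_lt hβ0) hBle
    have hcomb : (BadH.card : ℝ) * Real.exp (Real.log z * (3 * μ)) ≤ Real.exp E2 * Nr :=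
      le_trans stepA (le_trans stepB stepC)
    have hBadle : (BadH.card : ℝ) ≤ Real.exp (E2 - Real.log z * (3 * μ)) * Nr := by
      rw [← le_div_iff₀ (Real.exp_pos _)] at hcomb
      calc (BadH.card : ℝ) ≤ Real.exp E2 * Nr / Real.exp (Real.log z * (3 * μ)) := hcomb
        _ = Real.exp (E2 - Real.log z * (3 * μ)) * Nr := by
            rw [Real.exp_sub]; ring
    -- numeric bound on the exponent
    have hEbound : E2 - Real.log z * (3 * μ) ≤ -(2/25) * μ := by
      have h1 : Real.log z * (3*μ) ≥ (1/6) * (3*μ) :=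
        mul_le_mul_of_nonneg_right hlogz (by linarith)
      have h2 : E2 = (21/50) * μ := by
        rw [hE2, hμ, hzdef]
        ring
      linarith
    have hμ50 : 50 * L ≤ μ := by
      have h2 : α * β * (lam:ℝ) ≤ μ := by
        rw [hμ]
        nlinarith [hAge]
      have h3 : α * β * (50 * α⁻¹ * (β^2)⁻¹ * L) ≤ α * β * lam :=
        mul_le_mul_of_nonneg_left hlam (by positivity)
      have h4 : α * β * (50 * α⁻¹ * (β^2)⁻¹ * L) = 50 * L / β := by
        field_simp
      have h5 : 50 * L ≤ 50 * L / β := by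
        rw [le_div_iff₀ hβ0]
        nlinarith
      linarith
    have hexp4 : Real.exp (-(2/25) * μ) ≤ Real.exp (-(4:ℝ) * L) := by
      apply Real.exp_le_exp.mpr
      linarith
    have hexpL : Real.exp (-(4:ℝ) * L) = ν^4 := by
      rw [hLdef, one_div, Real.log_inv]
      have : -(4:ℝ) * (- Real.log ν) = Real.log (ν^4) := by
        rw [Real.log_pow]
        push_cast
        ring
      rw [this, Real.exp_log (by positivity)]
    have hν4 : ν^4 ≤ ν/2 := by
      have h1 : ν^3 ≤ (2/3:ℝ)^3 := pow_le_pow_left₀ (le_of_lt hν0) hν23 3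
      nlinarith
    calc (BadH.card : ℝ) ≤ Real.exp (E2 - Real.log z * (3 * μ)) * Nr := hBadle
      _ ≤ (ν/2) * Nr := by
          apply mul_le_mul_of_nonneg_right _ hNnn
          calc Real.exp (E2 - Real.log z * (3 * μ)) ≤ Real.exp (-(2/25) * μ) :=
                Real.exp_le_exp.mpr hEbound
            _ ≤ Real.exp (-(4:ℝ) * L) := hexp4
            _ = ν^4 := hexpL
            _ ≤ ν/2 := hν4
      _ = ν / 2 * Nr := by ring
  · -- Markov case
    push_neg at hν23
    have hmark := markov_bound hn A B
    have hsum : (BadH.card : ℝ) * (3 * (β * A.card)) ≤ ∑ h ∈ BadH, (Y h : ℝ) := by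
      calc (BadH.card : ℝ) * (3 * (β * A.card)) = ∑ _h ∈ BadH, 3 * (β * (A.card:ℝ)) := by
            rw [Finset.sum_const, nsmul_eq_mul]
        _ ≤ ∑ h ∈ BadH, (Y h : ℝ) := Finset.sum_le_sum fun h hh => le_of_lt (hYbound h hh)
    have htot : ∑ h ∈ BadH, (Y h : ℝ) ≤ β * A.card * Nr := by
      calc ∑ h ∈ BadH, (Y h : ℝ) ≤ ∑ h : U → Fin lam, (Y h : ℝ) := by
            apply Finset.sum_le_sum_of_subset_of_nonneg (Finset.subset_univ _)
            intro h _ _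
            positivity
        _ ≤ (A.card : ℝ) * B.card * (lam:ℝ) ^ (Fintype.card U) / lam := hmark
        _ ≤ β * A.card * Nr := by
            rw [hNcard]
            rw [div_le_iff₀ hlampos]
            have hpow : (0:ℝ) ≤ (lam:ℝ) ^ (Fintype.card U) := by positivity
            have hAnn : (0:ℝ) ≤ A.card := by positivity
            nlinarith [mul_le_mul_of_nonneg_right hBle (mul_nonneg hAnn hpow)]
    have hb : (BadH.card : ℝ) ≤ Nr / 3 := by
      nlinarith [hsum, htot, hμpos]
    calc (BadH.card : ℝ) ≤ Nr / 3 := hb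
      _ ≤ ν / 2 * Nr := by nlinarith
end
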